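/- If 𝔟 = 𝔠, then every star-Menger Isbell–Mrówka space Ψ(𝒜) is strongly star-Hurewicz. (Specifically: every star-Menger Ψ-space has |𝒜| < 𝔠, using cof(Fin(𝔠)^ℕ) = 𝔠, and every Ψ-space with |𝒜| < 𝔟 is strongly star-Hurewicz.) -/

import Mathlib

open Set Filter

universe u

/-- Least cardinality of a cofinal subset of a preorder. -/
noncomputable def poCof (α : Type u) [Preorder α] : Cardinal.{u} :=
  sInf { c | ∃ S : Set α, (∀ a : α, ∃ b ∈ S, a ≤ b) ∧ Cardinal.mk S = c }

/-- `cof([X]^ℵ₀)`: cofinality of the family of countably infinite subsets of `X`,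
ordered by inclusion. -/
noncomputable def ctblCof (X : Type u) : Cardinal.{u} :=
  poCof { A : Set X // A.Countable ∧ A.Infinite }

/-- The dominating number 𝔡. -/
noncomputable def dNum : Cardinal :=
  sInf { c | ∃ D : Set (ℕ → ℕ),
    (∀ f : ℕ → ℕ, ∃ g ∈ D, ∀ᶠ n in atTop, f n ≤ g n) ∧ Cardinal.mk D = c }

/-- The unbounding number 𝔟. -/
noncomputable def bNum : Cardinal :=
  sInf { c | ∃ B : Set (ℕ → ℕ),
    (∀ g : ℕ → ℕ, ∃ f ∈ B, ¬ ∀ᶠ n in atTop, f n ≤ g n) ∧ Cardinal.mk B = c }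

/-- An almost disjoint family on ℕ. -/
def AlmostDisjoint (𝒜 : Set (Set ℕ)) : Prop :=
  (∀ A ∈ 𝒜, A.Infinite) ∧ ∀ A ∈ 𝒜, ∀ B ∈ 𝒜, A ≠ B → (A ∩ B).Finite

/-- The underlying set of the Isbell–Mrówka space `Ψ(𝒜) = ℕ ∪ 𝒜`. -/
abbrev PsiSpace (𝒜 : Set (Set ℕ)) : Type := ℕ ⊕ ↥𝒜

/-- The Isbell–Mrówka topology: naturals are isolated, and basic neighborhoods
of `A ∈ 𝒜` are `{A} ∪ (A \ F)` for finite `F`. -/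
instance psiTop (𝒜 : Set (Set ℕ)) : TopologicalSpace (PsiSpace 𝒜) where
  IsOpen U := ∀ A : 𝒜, Sum.inr A ∈ U → { n : ℕ | n ∈ (A : Set ℕ) ∧ Sum.inl n ∉ U }.Finite
  isOpen_univ := by
    intro A _
    convert Set.finite_empty using 1
    ext n; simp
  isOpen_inter := by
    intro U V hU hV A hA
    apply ((hU A hA.1).union (hV A hA.2)).subset
    rintro n ⟨h1, h2⟩
    by_cases h : Sum.inl n ∈ U
    · exact Or.inr ⟨h1, fun hv => h2 ⟨h, hv⟩⟩
    · exact Or.inl ⟨h1, h⟩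
  isOpen_sUnion := by
    intro s hs A hA
    obtain ⟨t, ht, hAt⟩ := hA
    apply (hs t ht A hAt).subset
    rintro n ⟨h1, h2⟩
    exact ⟨h1, fun h => h2 ⟨t, ht, h⟩⟩

/-- `st(S, 𝒰) = ⋃ {U ∈ 𝒰 : U ∩ S ≠ ∅}`. -/
def starSet {X : Type*} (S : Set X) (𝒰 : Set (Set X)) : Set X :=
  ⋃₀ { U ∈ 𝒰 | (U ∩ S).Nonempty }

def StarMenger (X : Type*) [TopologicalSpace X] : Prop :=
  ∀ 𝒰 : ℕ → Set (Set X), (∀ n, ∀ U ∈ 𝒰 n, IsOpen U) → (∀ n, ⋃₀ 𝒰 n = univ) →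
    ∃ ℱ : ℕ → Set (Set X), (∀ n, ℱ n ⊆ 𝒰 n ∧ (ℱ n).Finite) ∧
      (⋃ n, starSet (⋃₀ ℱ n) (𝒰 n)) = univ

def StarHurewicz (X : Type*) [TopologicalSpace X] : Prop :=
  ∀ 𝒰 : ℕ → Set (Set X), (∀ n, ∀ U ∈ 𝒰 n, IsOpen U) → (∀ n, ⋃₀ 𝒰 n = univ) →
    ∃ ℱ : ℕ → Set (Set X), (∀ n, ℱ n ⊆ 𝒰 n ∧ (ℱ n).Finite) ∧
      ∀ x : X, ∀ᶠ n in atTop, x ∈ starSet (⋃₀ ℱ n) (𝒰 n)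

def StarRothberger (X : Type*) [TopologicalSpace X] : Prop :=
  ∀ 𝒰 : ℕ → Set (Set X), (∀ n, ∀ U ∈ 𝒰 n, IsOpen U) → (∀ n, ⋃₀ 𝒰 n = univ) →
    ∃ U : ℕ → Set X, (∀ n, U n ∈ 𝒰 n) ∧ (⋃ n, starSet (U n) (𝒰 n)) = univ

def StronglyStarMenger (X : Type*) [TopologicalSpace X] : Prop :=
  ∀ 𝒰 : ℕ → Set (Set X), (∀ n, ∀ U ∈ 𝒰 n, IsOpen U) → (∀ n, ⋃₀ 𝒰 n = univ) →
    ∃ F : ℕ → Set X, (∀ n, (F n).Finite) ∧ (⋃ n, starSet (F n) (𝒰 n)) = univ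

def StronglyStarHurewicz (X : Type*) [TopologicalSpace X] : Prop :=
  ∀ 𝒰 : ℕ → Set (Set X), (∀ n, ∀ U ∈ 𝒰 n, IsOpen U) → (∀ n, ⋃₀ 𝒰 n = univ) →
    ∃ F : ℕ → Set X, (∀ n, (F n).Finite) ∧
      ∀ x : X, ∀ᶠ n in atTop, x ∈ starSet (F n) (𝒰 n)


/-- Bonanzinga–Matveev: if `|𝒜| < 𝔟` then `Ψ(𝒜)` is strongly star-Hurewicz. -/
lemma aux_ssh (𝒜 : Set (Set ℕ)) (had : AlmostDisjoint 𝒜)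
    (hlt : Cardinal.mk 𝒜 < bNum) : StronglyStarHurewicz (PsiSpace 𝒜) := by
  intro 𝒰 hopen hcov
  have hU : ∀ (A : ↥𝒜) (n : ℕ), ∃ U, U ∈ 𝒰 n ∧ Sum.inr A ∈ U := by
    intro A n
    have : (Sum.inr A : PsiSpace 𝒜) ∈ ⋃₀ 𝒰 n := by rw [hcov n]; trivial
    simpa [Set.mem_sUnion] using this
  choose U hU1 hU2 using hU
  have hf : ∀ (A : ↥𝒜) (n : ℕ), ∃ k : ℕ, Sum.inl k ∈ U A n := by
    intro A n
    have hop := hopen n (U A n) (hU1 A n) A (hU2 A n)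
    have hinf : (A : Set ℕ).Infinite := had.1 A A.2
    obtain ⟨k, hk1, hk2⟩ := (hinf.diff hop).nonempty
    exact ⟨k, by by_contra h; exact hk2 ⟨hk1, h⟩⟩
  choose f hfU using hf
  have hbd : ∃ g : ℕ → ℕ, ∀ A : ↥𝒜, ∀ᶠ n in atTop, f A n ≤ g n := by
    by_contra h
    push_neg at h
    have hmem : bNum ≤ Cardinal.mk (Set.range f) := by
      apply csInf_le'
      refine ⟨Set.range f, ?_, rfl⟩
      intro g
      obtain ⟨A, hA⟩ := h g
      exact ⟨f A, Set.mem_range_self A,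
        Filter.not_eventually.mpr (hA.mono fun n hn => not_le.mpr hn)⟩
    exact absurd ((hmem.trans Cardinal.mk_range_le).trans_lt hlt) (lt_irrefl _)
  obtain ⟨g, hg⟩ := hbd
  refine ⟨fun n => Sum.inl '' Set.Iic (max (g n) n), fun n => ((Set.finite_Iic _).image _), ?_⟩
  intro x
  match x with
  | Sum.inl k =>
    filter_upwards [eventually_ge_atTop k] with n hn
    have : (Sum.inl k : PsiSpace 𝒜) ∈ ⋃₀ 𝒰 n := by rw [hcov n]; trivial
    obtain ⟨W, hW, hxW⟩ := this
    exact ⟨W, ⟨hW, ⟨Sum.inl k, hxW, ⟨k, le_max_of_le_right hn, rfl⟩⟩⟩, hxW⟩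
  | Sum.inr A =>
    filter_upwards [hg A] with n hn
    exact ⟨U A n, ⟨hU1 A n, ⟨Sum.inl (f A n), hfU A n,
      ⟨f A n, le_max_of_le_left hn, rfl⟩⟩⟩, hU2 A n⟩

/-- If `Ψ(𝒜)` is star-Menger then `|𝒜| < 𝔠`. -/
lemma aux_sm (𝒜 : Set (Set ℕ)) (had : AlmostDisjoint 𝒜)
    (hm : StarMenger (PsiSpace 𝒜)) : Cardinal.mk 𝒜 < Cardinal.continuum := by
  have hle : Cardinal.mk 𝒜 ≤ Cardinal.continuum := by
    calc Cardinal.mk 𝒜 ≤ Cardinal.mk (Set ℕ) := Cardinal.mk_set_le 𝒜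
    _ = 2 ^ Cardinal.aleph0 := by rw [Cardinal.mk_set, Cardinal.mk_nat]
    _ = Cardinal.continuum := Cardinal.two_power_aleph0
  rcases lt_or_eq_of_le hle with h | hc
  · exact h
  exfalso
  have hinfA : Infinite ↥𝒜 := by
    rw [Cardinal.infinite_iff, hc]; exact Cardinal.aleph0_le_continuum
  -- the type of potential selections
  set T := ℕ → Finset ℕ × Finset ↥𝒜 with hT
  have hmkT : Cardinal.mk (T × (ℕ → ℕ)) ≤ Cardinal.mk ↥𝒜 := by
    rw [hc]
    have h1 : Cardinal.mk T ≤ Cardinal.continuum := by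
      have : Cardinal.mk (Finset ℕ × Finset ↥𝒜) = Cardinal.continuum := by
        rw [Cardinal.mk_prod, Cardinal.lift_id, Cardinal.lift_id,
          Cardinal.mk_finset_of_infinite, Cardinal.mk_finset_of_infinite,
          Cardinal.mk_nat, hc, Cardinal.aleph0_mul_continuum]
      rw [hT, ← Cardinal.power_def, this, Cardinal.mk_nat,
        Cardinal.continuum_power_aleph0]
    have h2 : Cardinal.mk (ℕ → ℕ) = Cardinal.continuum := by
      rw [← Cardinal.power_def, Cardinal.mk_nat, Cardinal.aleph0_power_aleph0]
    calc Cardinal.mk (T × (ℕ → ℕ))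
        = Cardinal.mk T * Cardinal.mk (ℕ → ℕ) := by
          rw [Cardinal.mk_prod, Cardinal.lift_id, Cardinal.lift_id]
      _ ≤ Cardinal.continuum * Cardinal.continuum := mul_le_mul' h1 h2.le
      _ = Cardinal.continuum := Cardinal.continuum_mul_self
  obtain ⟨j⟩ := Cardinal.le_def _ _ |>.mp hmkT
  -- for each σ pick an element of 𝒜 avoiding all the finsets in σ
  have hpick : ∀ σ : T, ∃ g : ℕ → ℕ, j (σ, g) ∉ ⋃ n, ((σ n).2 : Set ↥𝒜) := by
    intro σ
    by_contra h
    push_neg at h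
    have hcnt : (⋃ n, ((σ n).2 : Set ↥𝒜)).Countable :=
      Set.countable_iUnion (fun n => ((σ n).2).countable_toSet
  )
    have : Countable (ℕ → ℕ) := by
      have hinj : Function.Injective
          (fun g : ℕ → ℕ => (⟨j (σ, g), h g⟩ : ↥(⋃ n, ((σ n).2 : Set ↥𝒜)))) := by
        intro g1 g2 hgg
        have := j.injective (Subtype.mk_eq_mk.mp hgg)
        exact (Prod.mk.injEq _ _ _ _ ▸ this).2
      have := hcnt.to_subtype
      exact hinj.countable
    have : Cardinal.mk (ℕ → ℕ) ≤ Cardinal.aleph0 := Cardinal.mk_le_aleph0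
    rw [← Cardinal.power_def, Cardinal.mk_nat, Cardinal.aleph0_power_aleph0] at this
    exact absurd this (not_le.mpr Cardinal.aleph0_lt_continuum)
  choose gsel hgsel using hpick
  set Asel : T → ↥𝒜 := fun σ => j (σ, gsel σ) with hAsel
  have hAinj : Function.Injective Asel := by
    intro σ1 σ2 hss
    have := j.injective hss
    exact (Prod.mk.injEq _ _ _ _ ▸ this).1
  classical
  -- the finite sets to remove
  set F : ↥𝒜 → ℕ → Set ℕ := fun A n =>
    if h : ∃ σ, Asel σ = A then
      ((A : Set ℕ) ∩ ((h.choose n).1 : Set ℕ)) ∪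
        ⋃ A' ∈ ((h.choose n).2 : Finset ↥𝒜), ((A : Set ℕ) ∩ (A' : Set ℕ))
    else ∅ with hF
  have hFeq : ∀ (σ : T) (n : ℕ), F (Asel σ) n =
      ((Asel σ : Set ℕ) ∩ ((σ n).1 : Set ℕ)) ∪
        ⋃ A' ∈ ((σ n).2 : Finset ↥𝒜), ((Asel σ : Set ℕ) ∩ (A' : Set ℕ)) := by
    intro σ n
    have hex : ∃ σ', Asel σ' = Asel σ := ⟨σ, rfl⟩
    have hch : hex.choose = σ := hAinj hex.choose_spec
    rw [hF]
    simp only [dif_pos hex, hch]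
  have hFfin : ∀ (A : ↥𝒜) (n : ℕ), (F A n).Finite := by
    intro A n
    by_cases hex : ∃ σ, Asel σ = A
    · have hFv : F A n = ((A : Set ℕ) ∩ ((hex.choose n).1 : Set ℕ)) ∪
          ⋃ A' ∈ ((hex.choose n).2 : Finset ↥𝒜), ((A : Set ℕ) ∩ (A' : Set ℕ)) := by
        rw [hF]; simp only [dif_pos hex]
      rw [hFv]
      apply Set.Finite.union
      · exact (((hex.choose n).1).finite_toSet).inter_of_right _
      · apply Set.Finite.biUnion ((hex.choose n).2).finite_toSet
        intro A' hA'
        have hne : A' ≠ A := by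
          intro hAA
          apply hgsel hex.choose
          apply Set.mem_iUnion.mpr ⟨n, ?_⟩
          show Asel hex.choose ∈ (((hex.choose n).2 : Finset ↥𝒜) : Set ↥𝒜)
          rw [hex.choose_spec]
          exact hAA ▸ hA'
        have : (A : Set ℕ) ≠ (A' : Set ℕ) := fun hset => hne (Subtype.ext hset.symm)
        exact had.2 A A.2 A' A'.2 this
    · have hFv : F A n = ∅ := by rw [hF]; simp only [dif_neg hex]
      rw [hFv]; exact Set.finite_empty
  -- the covers
  set V : ↥𝒜 → ℕ → Set (PsiSpace 𝒜) := fun A n =>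
    insert (Sum.inr A) (Sum.inl '' ((A : Set ℕ) \ F A n)) with hV
  have hVinr : ∀ (A B : ↥𝒜) (n : ℕ), Sum.inr B ∈ V A n → B = A := by
    intro A B n hB
    rcases hB with h | ⟨k, _, hk⟩
    · exact Sum.inr.inj h
    · exact absurd hk (by simp)
  set 𝒰 : ℕ → Set (Set (PsiSpace 𝒜)) := fun n =>
    {S | ∃ k : ℕ, S = {Sum.inl k}} ∪ {S | ∃ A : ↥𝒜, S = V A n} with h𝒰
  have hopen : ∀ n, ∀ W ∈ 𝒰 n, IsOpen W := by
    intro n W hW B hB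
    rcases hW with ⟨k, rfl⟩ | ⟨A, rfl⟩
    · exact absurd hB (by simp)
    · have hBA : B = A := hVinr A B n hB
      subst hBA
      apply (hFfin B n).subset
      rintro m ⟨hm1, hm2⟩
      by_contra hmF
      exact hm2 (Set.mem_insert_iff.mpr (Or.inr ⟨m, ⟨hm1, hmF⟩, rfl⟩))
  have hcov : ∀ n, ⋃₀ 𝒰 n = univ := by
    intro n
    ext x
    simp only [Set.mem_univ, iff_true, Set.mem_sUnion]
    match x with
    | Sum.inl k => exact ⟨{Sum.inl k}, Or.inl ⟨k, rfl⟩, rfl⟩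
    | Sum.inr A => exact ⟨V A n, Or.inr ⟨A, rfl⟩, Set.mem_insert _ _⟩
  obtain ⟨ℱ, hℱ, hstar⟩ := hm 𝒰 hopen hcov
  -- extract the selector data
  have hVinj : ∀ (n : ℕ) (A A' : ↥𝒜), V A n = V A' n → A = A' := by
    intro n A A' hAA
    have : Sum.inr A ∈ V A' n := by rw [← hAA]; exact Set.mem_insert _ _
    exact hVinr A' A n this
  have hGfin : ∀ n, {A : ↥𝒜 | V A n ∈ ℱ n}.Finite := by
    intro n
    have : {A : ↥𝒜 | V A n ∈ ℱ n} = (fun A : ↥𝒜 => V A n) ⁻¹' (ℱ n) := rfl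
    rw [this]
    exact (hℱ n).2.preimage (fun A _ A' _ h => hVinj n A A' h)
  have hKfin : ∀ n, {k : ℕ | ({Sum.inl k} : Set (PsiSpace 𝒜)) ∈ ℱ n}.Finite := by
    intro n
    have hinj : Function.Injective (fun k : ℕ => ({Sum.inl k} : Set (PsiSpace 𝒜))) := by
      intro k1 k2 hkk
      simp only [Set.singleton_eq_singleton_iff] at hkk
      exact Sum.inl.inj hkk
    exact (hℱ n).2.preimage hinj.injOn
  set σ : T := fun n => ((hKfin n).toFinset, (hGfin n).toFinset) with hσ
  set Astar := Asel σ with hAstar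
  have hnotG : ∀ n, V Astar n ∉ ℱ n := by
    intro n hVn
    apply hgsel σ
    apply Set.mem_iUnion.mpr ⟨n, ?_⟩
    simp only [hσ, Finset.coe_sort_coe, Set.Finite.coe_toFinset, Set.mem_setOf_eq]
    exact hVn
  -- Astar is starred at some stage n
  have hin : (Sum.inr Astar : PsiSpace 𝒜) ∈ ⋃ n, starSet (⋃₀ ℱ n) (𝒰 n) := by
    rw [hstar]; trivial
  obtain ⟨_, ⟨n, rfl⟩, U, ⟨hU𝒰, hUne⟩, hxU⟩ := hin
  -- U must be V Astar n
  have hUV : U = V Astar n := by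
    rcases hU𝒰 with ⟨k, rfl⟩ | ⟨A, rfl⟩
    · exact absurd hxU (by simp)
    · rw [hVinr A Astar n hxU]
  subst hUV
  obtain ⟨x, hxV, W, hWℱ, hxW⟩ := hUne
  -- x is in V Astar n and in some W ∈ ℱ n; derive a contradiction
  have hFAstar := hFeq σ n
  rcases hℱ n |>.1 hWℱ with ⟨k, rfl⟩ | ⟨A', rfl⟩
  · -- W = {inl k}, so k was selected: k ∈ K n
    have hkK : k ∈ (σ n).1 := by
      simp only [hσ, Set.Finite.mem_toFinset, Set.mem_setOf_eq]
      exact hWℱ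
    have hxk : x = Sum.inl k := Set.mem_singleton_iff.mp hxW
    subst hxk
    rcases hxV with h | ⟨m, ⟨hm1, hm2⟩, hm3⟩
    · exact absurd h (by simp)
    · have hmk : m = k := Sum.inl.inj hm3
      subst hmk
      apply hm2
      rw [← hAstar] at hFAstar
      rw [hFAstar]
      exact Or.inl ⟨hm1, hkK⟩
  · -- W = V A' n with A' selected
    have hA'G : A' ∈ (σ n).2 := by
      simp only [hσ, Set.Finite.mem_toFinset, Set.mem_setOf_eq]
      exact hWℱ
    have hA'ne : A' ≠ Astar := by
      intro hh
      exact hnotG n (hh ▸ hWℱ)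
    rcases hxV with h | ⟨m, ⟨hm1, hm2⟩, hm3⟩
    · -- x = inr Astar ∈ V A' n gives Astar = A'
      subst h
      exact hA'ne ((hVinr A' Astar n hxW)).symm
    · -- x = inl m with m ∈ Astar \ F Astar n, but also m ∈ A'
      subst hm3
      rcases hxW with h | ⟨m', ⟨hm'1, _⟩, hm'3⟩
      · exact absurd h (by simp)
      · have hmm : m' = m := Sum.inl.inj hm'3
        subst hmm
        apply hm2
        rw [← hAstar] at hFAstar
        rw [hFAstar]
        refine Or.inr (Set.mem_biUnion hA'G ⟨hm1, hm'1⟩)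

/-- if `𝔟 = 𝔠`, every star-Menger Ψ-space is strongly star-Hurewicz. -/
theorem starMenger_implies_stronglyStarHurewicz (hb : bNum = Cardinal.continuum)
    (𝒜 : Set (Set ℕ)) (had : AlmostDisjoint 𝒜)
    (hm : StarMenger (PsiSpace 𝒜)) :
    StronglyStarHurewicz (PsiSpace 𝒜) := by
  exact aux_ssh 𝒜 had (by rw [hb]; exact aux_sm 𝒜 had hm)
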